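/- Let A be an (n+1)×(n+1) Hermitian matrix whose off-diagonal sparsity pattern is the adjacency structure of a tree T on n+1 vertices, with A_{ik} ≠ 0 for every edge {i,k} of T. If A is positive semidefinite, then the kernel of A has dimension at most 1. -/

import Mathlib

open Complex Matrix ComplexOrder

/-- In an acyclic graph, two neighbors of `w` that are connected by a walk avoiding `w`
must coincide. -/
lemma tree_unique_neighbor {V : Type*} [DecidableEq V] {T : SimpleGraph V} (hac : T.IsAcyclic)
    {w u₁ u₂ : V} (h1 : T.Adj w u₁) (h2 : T.Adj w u₂)
    (p : T.Walk u₁ u₂) (hp : w ∉ p.support) : u₁ = u₂ := by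
  have hq : w ∉ p.toPath.1.support := fun h => hp (p.support_toPath_subset h)
  have hPath : (SimpleGraph.Walk.cons h1 p.toPath.1).IsPath := p.toPath.2.cons hq
  have heq := hac.path_unique (SimpleGraph.Path.singleton h2) ⟨_, hPath⟩
  have hlen := congrArg (fun q : T.Path w u₂ => q.1.length) heq
  simp only [SimpleGraph.Path.singleton, SimpleGraph.Walk.length_cons,
    SimpleGraph.Walk.length_nil] at hlen
  have h0 : p.toPath.1.length = 0 := by omega
  exact SimpleGraph.Walk.eq_of_length_eq_zero h0

/-- Key step: for a PSD matrix whose off-diagonal support is a tree, a kernel vector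
vanishing at `w` also vanishes at every neighbor of `w`. -/
lemma key_step {m : ℕ} {T : SimpleGraph (Fin m)} (hac : T.IsAcyclic)
    {A : Matrix (Fin m) (Fin m) ℂ}
    (hsupp : ∀ i k, i ≠ k → (A i k ≠ 0 ↔ T.Adj i k))
    (hpsd : A.PosSemidef) {x : Fin m → ℂ} (hx : A.mulVec x = 0)
    {w : Fin m} (hw : x w = 0) {u : Fin m} (hadj : T.Adj w u) : x u = 0 := by
  classical
  -- R v : v is connected to u by a walk avoiding w
  set R : Fin m → Prop := fun v => ∃ p : T.Walk u v, w ∉ p.support with hR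
  have hRu : R u := ⟨SimpleGraph.Walk.nil, by simpa using hadj.ne⟩
  have hRnotw : ¬ R w := by
    rintro ⟨p, hp⟩
    exact hp p.end_mem_support
  -- if R j and j adjacent to k ≠ w then R k
  have hRadj : ∀ j k, R j → k ≠ w → T.Adj j k → R k := by
    rintro j k ⟨p, hp⟩ hkw hjk
    refine ⟨p.concat hjk, ?_⟩
    rw [SimpleGraph.Walk.support_concat]
    intro h
    rw [List.mem_append] at h
    rcases h with h | h
    · exact hp h
    · exact hkw (show w = k by simpa using h).symm
  set y : Fin m → ℂ := fun v => if R v then x v else 0 with hy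
  -- for j with R j, (A *ᵥ y) j = (A *ᵥ x) j = 0
  have hrow : ∀ j, R j → A.mulVec y j = 0 := by
    intro j hj
    have : A.mulVec y j = A.mulVec x j := by
      unfold Matrix.mulVec dotProduct
      refine Finset.sum_congr rfl fun k _ => ?_
      by_cases hk : R k
      · simp [hy, hk]
      · -- y k = 0; show A j k * x k = 0
        simp only [hy, if_neg hk]
        by_cases hkw : k = w
        · subst hkw; simp [hw]
        · have hjk : j ≠ k := fun h => hk (h ▸ hj)
          have : A j k = 0 := by
            by_contra hne
            exact hk (hRadj j k hj hkw ((hsupp j k hjk).mp hne))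
          simp [this]
    rw [this, hx]
    rfl
  -- quadratic form of y is zero
  have hquad : star y ⬝ᵥ A.mulVec y = 0 := by
    unfold dotProduct
    refine Finset.sum_eq_zero fun j _ => ?_
    by_cases hj : R j
    · rw [hrow j hj]; ring
    · simp [hy, hj, Pi.star_apply]
  have hAy : A.mulVec y = 0 := (hpsd.dotProduct_mulVec_zero_iff y).mp hquad
  -- evaluate at w
  have hrw : A.mulVec y w = A w u * x u := by
    unfold Matrix.mulVec dotProduct
    rw [Finset.sum_eq_single u]
    · simp [hy, hRu]
    · intro k _ hku
      by_cases hk : R k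
      · -- k ≠ u with R k : A w k = 0, else k would be a second neighbor of w
        have hkw : k ≠ w := fun h => hRnotw (h ▸ hk)
        have : A w k = 0 := by
          by_contra hne
          obtain ⟨p, hp⟩ := hk
          exact hku (tree_unique_neighbor hac hadj ((hsupp w k (Ne.symm hkw)).mp hne)
            p hp).symm
        simp [this]
      · simp [hy, hk]
    · intro h
      exact absurd (Finset.mem_univ u) h
  have : A w u * x u = 0 := by rw [← hrw, hAy]; rfl
  rcases mul_eq_zero.mp this with h | h
  · exact absurd h ((hsupp w u hadj.ne).mpr hadj)
  · exact h

/-- Tree case of van der Holst's bound: a PSD Hermitian matrix whose off-diagonal support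
is the edge set of a tree has nullity at most 1. -/
theorem stmt10 (n : ℕ) (T : SimpleGraph (Fin (n + 1)))
    (htree : T.Connected ∧ T.IsAcyclic)
    (A : Matrix (Fin (n + 1)) (Fin (n + 1)) ℂ) (hherm : A.IsHermitian)
    (hsupp : ∀ i k, i ≠ k → (A i k ≠ 0 ↔ T.Adj i k))
    (hpsd : A.PosSemidef) :
    Module.finrank ℂ (LinearMap.ker A.mulVecLin) ≤ 1 := by
  classical
  obtain ⟨hconn, hac⟩ := htree
  -- evaluation at vertex 0 as a linear map on the kernel
  let f : (LinearMap.ker A.mulVecLin) →ₗ[ℂ] ℂ :=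
    { toFun := fun x => (x : Fin (n + 1) → ℂ) 0
      map_add' := fun x y => rfl
      map_smul' := fun c x => rfl }
  have hinj : Function.Injective f := by
    rw [injective_iff_map_eq_zero]
    intro x hx0
    have hker : A.mulVec (x : Fin (n + 1) → ℂ) = 0 := x.2
    -- zero propagates along walks
    have hwalk : ∀ (a b : Fin (n + 1)) (p : T.Walk a b),
        (x : Fin (n + 1) → ℂ) a = 0 → (x : Fin (n + 1) → ℂ) b = 0 := by
      intro a b p
      induction p with
      | nil => exact fun h => h
      | cons hadj p ih =>
        intro ha
        exact ih (key_step hac hsupp hpsd hker ha hadj)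
    apply Subtype.ext
    funext v
    obtain ⟨p⟩ := hconn.preconnected 0 v
    exact hwalk 0 v p hx0
  calc Module.finrank ℂ (LinearMap.ker A.mulVecLin)
      ≤ Module.finrank ℂ ℂ := LinearMap.finrank_le_finrank_of_injective hinj
    _ = 1 := Module.finrank_self ℂ
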